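/- arXiv:2103.15310 — 3 statements merged into one kernel-verified Lean document; each statement's English description precedes it below -/
import Mathlib

section
/- Let $\ell = (\ell_n)_{n\in\mathbb{N}}$ be a stick-breaking process on $[0,1]$, i.e. $L_0 = 1$, $L_n = L_{n-1} U_n$ and $\ell_n = L_{n-1} - L_n$ where $(U_n)$ are i.i.d. uniform on $(0,1)$. Then for every $c > 0$ and $n \in \mathbb{N}$, $0 \le n + \int_0^1 x^{-1}(e^{cx}-1)\,dx - \sum_{k=1}^n \mathbb{E}[e^{c\ell_k}] \le 2^{-n} \int_0^1 x^{-1}(e^{cx}-1)\,dx$. -/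
open MeasureTheory ProbabilityTheory Real Set Filter

/-! ### Elementary exponential bounds -/

lemma sb_exp_sub_one_le {y : ℝ} (hy : 0 ≤ y) : Real.exp y - 1 ≤ y * Real.exp y := by
  have h := Real.add_one_le_exp (-y)
  have h2 := mul_le_mul_of_nonneg_left h (Real.exp_pos y).le
  rw [← Real.exp_add] at h2
  simp only [add_neg_cancel, Real.exp_zero] at h2
  nlinarith

lemma sb_one_le_ratio {y : ℝ} (hy : 0 < y) : 1 ≤ (Real.exp y - 1) / y := by
  rw [le_div_iff₀ hy]
  nlinarith [Real.add_one_le_exp y]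

lemma sb_bound1 {b B x : ℝ} (hb : 0 ≤ b) (hB : b ≤ B) (hx : x ∈ Ioo (0:ℝ) 1) :
    (Real.exp (b*x) - 1)/x ∈ Icc 0 (B * Real.exp B) := by
  obtain ⟨hx0, hx1⟩ := hx
  have hbx : 0 ≤ b * x := by positivity
  have hBB : 0 ≤ B := le_trans hb hB
  constructor
  · exact div_nonneg (by nlinarith [Real.one_le_exp hbx]) hx0.le
  · rw [div_le_iff₀ hx0]
    have h1 : Real.exp (b*x) - 1 ≤ (b*x) * Real.exp (b*x) := sb_exp_sub_one_le hbx
    have h2 : Real.exp (b*x) ≤ Real.exp B := Real.exp_le_exp.2 (by nlinarith)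
    have h3 := mul_le_mul_of_nonneg_left h2 hbx
    have h4 := mul_le_mul_of_nonneg_right hB (mul_nonneg hx0.le (Real.exp_pos B).le)
    nlinarith [Real.exp_pos (b*x), Real.exp_pos B]

lemma sb_bound2 {b B x : ℝ} (hb : 0 < b) (hB : b ≤ B) (hx : x ∈ Ioo (0:ℝ) 1) :
    ((Real.exp (b*x) - 1)/(b*x) - 1)/x ∈ Icc 0 (B * Real.exp B) := by
  obtain ⟨hx0, hx1⟩ := hx
  have hbx : 0 < b * x := by positivity
  have hBB : 0 < B := lt_of_lt_of_le hb hB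
  constructor
  · exact div_nonneg (by linarith [sb_one_le_ratio hbx]) hx0.le
  · rw [div_le_iff₀ hx0]
    have h1 : Real.exp (b*x) - 1 ≤ (b*x) * Real.exp (b*x) := sb_exp_sub_one_le hbx.le
    have key : (Real.exp (b*x) - 1)/(b*x) ≤ Real.exp (b*x) := by
      rw [div_le_iff₀ hbx]; nlinarith
    have h2 : Real.exp (b*x) ≤ Real.exp B := Real.exp_le_exp.2 (by nlinarith)
    have h3 : Real.exp (b*x) - 1 ≤ (b*x) * Real.exp B := by
      nlinarith [mul_le_mul_of_nonneg_left h2 hbx.le]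
    have h4 : b * x ≤ B * x := mul_le_mul_of_nonneg_right hB hx0.le
    nlinarith [Real.exp_pos B, mul_le_mul_of_nonneg_right h4 (Real.exp_pos B).le]

/-! ### Integrability and elementary integrals on `Ioo 0 1` -/

lemma sb_integrableOn_of_bounded {f : ℝ → ℝ} (hf : Measurable f) {M : ℝ}
    (hM : ∀ x ∈ Ioo (0:ℝ) 1, |f x| ≤ M) : IntegrableOn f (Ioo (0:ℝ) 1) := by
  apply Integrable.mono' (integrable_const M) hf.aestronglyMeasurable.restrict
  filter_upwards [ae_restrict_mem measurableSet_Ioo] with x hx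
  exact hM x hx

lemma sb_int_exp {b : ℝ} (hb : b ≠ 0) :
    ∫ u in Ioo (0:ℝ) 1, Real.exp (b*u) = (Real.exp b - 1)/b := by
  rw [← integral_Ioc_eq_integral_Ioo, ← intervalIntegral.integral_of_le zero_le_one]
  have : ∀ u ∈ uIcc (0:ℝ) 1, HasDerivAt (fun u => Real.exp (b*u)/b) (Real.exp (b*u)) u := by
    intro u _
    have h : HasDerivAt (fun u => Real.exp (b*u)) (Real.exp (b*u) * b) u :=
      (Real.hasDerivAt_exp (b*u)).comp u (by simpa using (hasDerivAt_id u).const_mul b)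
    simpa [mul_div_assoc, mul_div_cancel_right₀ _ hb] using h.div_const b
  rw [intervalIntegral.integral_eq_sub_of_hasDerivAt this
    ((Real.continuous_exp.comp (continuous_const.mul continuous_id)).intervalIntegrable 0 1)]
  simp [mul_one]
  ring

lemma sb_meas1 (b : ℝ) : Measurable (fun x : ℝ => (Real.exp (b*x) - 1)/x) := by fun_prop

lemma sb_meas2 (b : ℝ) : Measurable (fun x : ℝ => ((Real.exp (b*x) - 1)/(b*x) - 1)/x) := by
  fun_prop

lemma sb_intg1 {b : ℝ} (hb : 0 ≤ b) :
    IntegrableOn (fun x : ℝ => (Real.exp (b*x) - 1)/x) (Ioo (0:ℝ) 1) := by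
  apply sb_integrableOn_of_bounded (sb_meas1 b) (M := b * Real.exp b)
  intro x hx
  have h := sb_bound1 hb le_rfl hx
  rw [abs_le]
  exact ⟨by linarith [h.1, h.2, mul_nonneg hb (Real.exp_pos b).le], h.2⟩

lemma sb_intg2 {b : ℝ} (hb : 0 < b) :
    IntegrableOn (fun x : ℝ => ((Real.exp (b*x) - 1)/(b*x) - 1)/x) (Ioo (0:ℝ) 1) := by
  apply sb_integrableOn_of_bounded (sb_meas2 b) (M := b * Real.exp b)
  intro x hx
  have h := sb_bound2 hb le_rfl hx
  rw [abs_le]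
  exact ⟨by linarith [h.1, h.2, mul_nonneg hb.le (Real.exp_pos b).le], h.2⟩

lemma sb_lim {a : ℝ} (ha : 0 < a) :
    Tendsto (fun x : ℝ => (Real.exp (a*x) - 1)/(a*x)) (nhdsWithin 0 (Ioi 0)) (nhds 1) := by
  have h := Real.hasDerivAt_exp 0
  rw [hasDerivAt_iff_tendsto_slope] at h
  have hslope : ∀ y : ℝ, slope Real.exp 0 y = (Real.exp y - 1)/y := by
    intro y; simp [slope_def_field, div_eq_mul_inv]
  have hmap : Tendsto (fun x : ℝ => a*x) (nhdsWithin 0 (Ioi 0)) (nhdsWithin 0 {0}ᶜ) := by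
    rw [tendsto_nhdsWithin_iff]
    constructor
    · have : Tendsto (fun x : ℝ => a*x) (nhds 0) (nhds (a*0)) :=
        (continuous_const.mul continuous_id).tendsto 0
      simpa using this.mono_left nhdsWithin_le_nhds
    · filter_upwards [self_mem_nhdsWithin] with x hx
      simp only [mem_compl_iff, mem_singleton_iff]
      exact (mul_pos ha hx).ne'
  have := h.comp hmap
  simp only [Real.exp_zero] at this h
  convert this using 2 with x
  rw [Function.comp_apply, hslope]

/-- The key FTC computation. -/
lemma sb_K {a : ℝ} (ha : 0 < a) :
    ∫ x in Ioo (0:ℝ) 1, ((Real.exp (a*x) - 1)/(a*x) - 1)/x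
      = 1 - (Real.exp a - 1)/a + ∫ x in Ioo (0:ℝ) 1, (Real.exp (a*x) - 1)/x := by
  have h1 := sb_intg1 ha.le (b := a)
  have h2 := sb_intg2 ha (b := a)
  have hsub : ∫ x in Ioo (0:ℝ) 1, (((Real.exp (a*x) - 1)/(a*x) - 1)/x - (Real.exp (a*x) - 1)/x)
      = (∫ x in Ioo (0:ℝ) 1, ((Real.exp (a*x) - 1)/(a*x) - 1)/x)
        - ∫ x in Ioo (0:ℝ) 1, (Real.exp (a*x) - 1)/x := integral_sub h2 h1
  have key : ∫ x in Ioo (0:ℝ) 1, (((Real.exp (a*x) - 1)/(a*x) - 1)/x - (Real.exp (a*x) - 1)/x)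
      = 1 - (Real.exp a - 1)/a := by
    set F : ℝ → ℝ := fun x => -((Real.exp (a*x) - 1)/(a*x)) with hF
    have hderiv : ∀ x ∈ Ioo (0:ℝ) 1,
        HasDerivAt F (((Real.exp (a*x) - 1)/(a*x) - 1)/x - (Real.exp (a*x) - 1)/x) x := by
      intro x hx
      have hx0 : (0:ℝ) < x := hx.1
      have hax : a * x ≠ 0 := by positivity
      have hn : HasDerivAt (fun x : ℝ => Real.exp (a*x) - 1) (Real.exp (a*x) * a) x := by
        have : HasDerivAt (fun x : ℝ => Real.exp (a*x)) (Real.exp (a*x) * a) x :=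
          (Real.hasDerivAt_exp (a*x)).comp x (by simpa using (hasDerivAt_id x).const_mul a)
        simpa using this.sub_const 1
      have hd : HasDerivAt (fun x : ℝ => a * x) a x := by
        simpa using (hasDerivAt_id x).const_mul a
      have := (hn.div hd hax).neg
      refine (this : HasDerivAt F _ x).congr_deriv ?_
      field_simp
      ring
    have hint : IntervalIntegrable
        (fun x => ((Real.exp (a*x) - 1)/(a*x) - 1)/x - (Real.exp (a*x) - 1)/x) volume 0 1 := by
      rw [intervalIntegrable_iff_integrableOn_Ioo_of_le zero_le_one]
      exact h2.sub h1
    have hlim0 : Tendsto F (nhdsWithin 0 (Ioi 0)) (nhds (-1)) := (sb_lim ha).neg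
    have hlim1 : Tendsto F (nhdsWithin 1 (Iio 1)) (nhds (-((Real.exp a - 1)/a))) := by
      have hc : ContinuousAt F 1 := by
        have : ContinuousAt (fun x : ℝ => (Real.exp (a*x) - 1)/(a*x)) 1 := by
          apply ContinuousAt.div
          · fun_prop
          · fun_prop
          · simpa using ha.ne'
        exact this.neg
      have := hc.continuousWithinAt (s := Iio 1)
      simpa [hF, ContinuousWithinAt, mul_one] using this
    have := intervalIntegral.integral_eq_sub_of_hasDerivAt_of_tendsto zero_lt_one hderiv hint
      hlim0 hlim1
    rw [intervalIntegral.integral_of_le zero_le_one, integral_Ioc_eq_integral_Ioo] at this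
    rw [this]; ring
  rw [hsub] at key
  linarith

/-! ### The function `G` -/

noncomputable def sbG (c t : ℝ) : ℝ := ∫ x in Ioo (0:ℝ) 1, (Real.exp (c*t*x) - 1)/x

lemma sbG_measurable (c : ℝ) : Measurable (sbG c) := by
  have : StronglyMeasurable (fun p : ℝ × ℝ => (Real.exp (c*p.1*p.2) - 1)/p.2) := by
    apply Measurable.stronglyMeasurable; fun_prop
  exact this.integral_prod_right'.measurable

lemma sbG_nonneg {c t : ℝ} (hc : 0 ≤ c) (ht : 0 ≤ t) : 0 ≤ sbG c t := by
  apply setIntegral_nonneg measurableSet_Ioo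
  intro x hx
  exact (sb_bound1 (by positivity) le_rfl hx).1

lemma sbG_intgOn {c t : ℝ} (hc : 0 ≤ c) (ht : 0 ≤ t) (ht1 : t ≤ 1) :
    IntegrableOn (fun x : ℝ => (Real.exp (c*t*x) - 1)/x) (Ioo (0:ℝ) 1) := sb_intg1 (by positivity)

lemma sbG_le {c t : ℝ} (hc : 0 ≤ c) (ht : 0 ≤ t) (ht1 : t ≤ 1) :
    sbG c t ≤ c * Real.exp c := by
  have hb : c * t ≤ c := by nlinarith
  have h : sbG c t ≤ ∫ _x in Ioo (0:ℝ) 1, c * Real.exp c := by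
    apply setIntegral_mono_on (sbG_intgOn hc ht ht1) (integrable_const _) measurableSet_Ioo
    intro x hx
    exact (sb_bound1 (by positivity) hb hx).2
  simpa [Real.volume_Ioo] using h

lemma sbG_le_mul {c t : ℝ} (hc : 0 ≤ c) (ht : 0 ≤ t) (ht1 : t ≤ 1) :
    sbG c t ≤ t * sbG c 1 := by
  rw [show t * sbG c 1 = ∫ x in Ioo (0:ℝ) 1, t * ((Real.exp (c*1*x) - 1)/x) from
    (integral_const_mul t _).symm]
  apply setIntegral_mono_on (sbG_intgOn hc ht ht1)
    ((sb_intg1 (by positivity : (0:ℝ) ≤ c*1)).const_mul t) measurableSet_Ioo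
  intro x hx
  rw [mul_one, mul_div_assoc']
  have hconv := convexOn_exp.2 (mem_univ (c*x)) (mem_univ (0:ℝ)) ht
    (by linarith : (0:ℝ) ≤ 1 - t) (by ring)
  simp only [smul_eq_mul, mul_zero, add_zero, Real.exp_zero, mul_one] at hconv
  have hnum : Real.exp (c*t*x) - 1 ≤ t * (Real.exp (c*x) - 1) := by
    have : c*t*x = t*(c*x) := by ring
    rw [this]
    nlinarith
  gcongr
  exact hx.1.le

lemma sbG_identity {c t : ℝ} (hc : 0 < c) (ht : 0 < t) (ht1 : t ≤ 1) :
    ∫ u in Ioo (0:ℝ) 1, (Real.exp (c*(t*(1-u))) + sbG c (t*u)) = 1 + sbG c t := by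
  set a := c * t with ha
  have ha0 : 0 < a := by positivity
  have hac : a ≤ c := by nlinarith
  -- integrability of the two pieces
  have int1 : IntegrableOn (fun u : ℝ => Real.exp (c*(t*(1-u)))) (Ioo (0:ℝ) 1) := by
    apply sb_integrableOn_of_bounded (by fun_prop) (M := Real.exp c)
    intro u hu
    rw [abs_of_pos (Real.exp_pos _)]
    apply Real.exp_le_exp.2
    nlinarith [hu.1, hu.2]
  have int2 : IntegrableOn (fun u : ℝ => sbG c (t*u)) (Ioo (0:ℝ) 1) := by
    apply sb_integrableOn_of_bounded (f := fun u => sbG c (t*u))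
      ((sbG_measurable c).comp (by fun_prop)) (M := c * Real.exp c)
    intro u hu
    have h0 : 0 ≤ t * u := by nlinarith [hu.1]
    have h1 : t * u ≤ 1 := by nlinarith [hu.1, hu.2]
    rw [abs_of_nonneg (sbG_nonneg hc.le h0)]
    exact sbG_le hc.le h0 h1
  rw [integral_add int1 int2]
  -- part 1
  have part1 : ∫ u in Ioo (0:ℝ) 1, Real.exp (c*(t*(1-u))) = (Real.exp a - 1)/a := by
    have hrw : ∀ u : ℝ, Real.exp (c*(t*(1-u))) = Real.exp a * Real.exp ((-a)*u) := by
      intro u; rw [← Real.exp_add, ha]; ring_nf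
    simp only [hrw]
    rw [integral_const_mul, sb_int_exp (neg_ne_zero.2 ha0.ne'), Real.exp_neg]
    field_simp
    ring
  -- part 2 : Fubini
  have part2 : ∫ u in Ioo (0:ℝ) 1, sbG c (t*u)
      = ∫ x in Ioo (0:ℝ) 1, ((Real.exp (a*x) - 1)/(a*x) - 1)/x := by
    have hGrw : ∀ u : ℝ, sbG c (t*u) = ∫ x in Ioo (0:ℝ) 1, (Real.exp (a*u*x) - 1)/x := by
      intro u
      unfold sbG
      congr 1 with x
      rw [ha]; ring_nf
    simp only [hGrw]
    have hint : Integrable (Function.uncurry (fun u x : ℝ => (Real.exp (a*u*x) - 1)/x))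
        ((volume.restrict (Ioo (0:ℝ) 1)).prod (volume.restrict (Ioo (0:ℝ) 1))) := by
      constructor
      · apply Measurable.aestronglyMeasurable
        apply Measurable.div _ measurable_snd
        fun_prop
      · rw [Measure.prod_restrict]
        haveI : IsFiniteMeasure ((volume.prod volume).restrict
            ((Ioo (0:ℝ) 1) ×ˢ (Ioo (0:ℝ) 1))) := by
          constructor
          rw [Measure.restrict_apply_univ, Measure.prod_prod, Real.volume_Ioo]
          simp
        apply (hasFiniteIntegral_const (c * Real.exp c)).mono'
        filter_upwards [ae_restrict_mem (measurableSet_Ioo.prod measurableSet_Ioo)] with p hp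
        obtain ⟨hp1, hp2⟩ := hp
        have hb0 : 0 ≤ a * p.1 := by nlinarith [hp1.1.le]
        have hbc : a * p.1 ≤ c := by nlinarith [hp1.1.le, hp1.2.le]
        have h := sb_bound1 hb0 hbc hp2
        rw [Function.uncurry]
        rw [Real.norm_eq_abs, abs_of_nonneg (by simpa [mul_assoc] using h.1)]
        simpa [mul_assoc] using h.2
    rw [integral_integral_swap hint]
    apply setIntegral_congr_fun measurableSet_Ioo
    intro x hx
    have hax : 0 < a * x := by nlinarith [hx.1]
    have hrw2 : ∀ u : ℝ, (Real.exp (a*u*x) - 1)/x = (Real.exp ((a*x)*u) - 1)/x := by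
      intro u; ring_nf
    simp only [hrw2]
    rw [integral_div]
    have hsub : ∫ u in Ioo (0:ℝ) 1, (Real.exp ((a*x)*u) - 1)
        = (∫ u in Ioo (0:ℝ) 1, Real.exp ((a*x)*u)) - ∫ _u in Ioo (0:ℝ) 1, (1:ℝ) := by
      apply integral_sub _ (integrable_const 1)
      apply sb_integrableOn_of_bounded (by fun_prop) (M := Real.exp (a*x))
      intro u hu
      rw [abs_of_pos (Real.exp_pos _)]
      exact Real.exp_le_exp.2 (by nlinarith [hu.1, hu.2])
    rw [hsub, sb_int_exp hax.ne']
    simp [Real.volume_Ioo]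
  rw [part1, part2, sb_K ha0]
  have : ∫ x in Ioo (0:ℝ) 1, (Real.exp (a*x) - 1)/x = sbG c t := by
    unfold sbG; rw [ha]
  rw [this]
  ring

/-- Stick-breaking process on `[0,1]`: `L 0 = 1`, `L (n+1) = L n * U (n+1)`,
`ℓ (n+1) = L n - L (n+1)`, with `(U n)` i.i.d. uniform on `(0,1)`.  Then for every
`c > 0` and `n : ℕ`,
`0 ≤ n + ∫_0^1 x⁻¹ (e^{cx} - 1) dx - ∑_{k=1}^n E[e^{c ℓ k}]
   ≤ 2⁻ⁿ ∫_0^1 x⁻¹ (e^{cx} - 1) dx`. -/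
theorem stmt_0 {Ω : Type*} [MeasurableSpace Ω] (P : Measure Ω) [IsProbabilityMeasure P]
    (U : ℕ → Ω → ℝ) (hUmeas : ∀ n, Measurable (U n))
    (hUindep : iIndepFun U P)
    (hUunif : ∀ n, Measure.map (U n) P = volume.restrict (Ioo (0 : ℝ) 1))
    (L ℓ : ℕ → Ω → ℝ)
    (hL0 : ∀ ω, L 0 ω = 1)
    (hL : ∀ n ω, L (n + 1) ω = L n ω * U (n + 1) ω)
    (hℓ : ∀ n ω, ℓ (n + 1) ω = L n ω - L (n + 1) ω)
    (c : ℝ) (hc : 0 < c) (n : ℕ) :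
    0 ≤ (n : ℝ) + (∫ x in Ioo (0 : ℝ) 1, (Real.exp (c * x) - 1) / x)
        - ∑ k ∈ Finset.Icc 1 n, ∫ ω, Real.exp (c * ℓ k ω) ∂P ∧
    (n : ℝ) + (∫ x in Ioo (0 : ℝ) 1, (Real.exp (c * x) - 1) / x)
        - ∑ k ∈ Finset.Icc 1 n, ∫ ω, Real.exp (c * ℓ k ω) ∂P
      ≤ 2 ^ (-(n : ℤ)) * ∫ x in Ioo (0 : ℝ) 1, (Real.exp (c * x) - 1) / x := by
  -- measurability
  have hLmeas : ∀ k, Measurable (L k) := by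
    intro k
    induction k with
    | zero =>
      have : L 0 = fun _ => (1:ℝ) := funext hL0
      rw [this]; exact measurable_const
    | succ k ih =>
      have : L (k+1) = fun ω => L k ω * U (k+1) ω := funext (hL k)
      rw [this]; exact ih.mul (hUmeas _)
  have hℓmeas : ∀ k, Measurable (ℓ (k+1)) := by
    intro k
    have : ℓ (k+1) = fun ω => L k ω - L (k+1) ω := funext (hℓ k)
    rw [this]; exact (hLmeas k).sub (hLmeas (k+1))
  -- a.s. facts
  have hae : ∀ᵐ ω ∂P, ∀ i, U i ω ∈ Ioo (0:ℝ) 1 := by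
    rw [ae_all_iff]
    intro i
    rw [ae_iff]
    have : {ω | ¬ U i ω ∈ Ioo (0:ℝ) 1} = U i ⁻¹' (Ioo (0:ℝ) 1)ᶜ := rfl
    rw [this, ← Measure.map_apply (hUmeas i) measurableSet_Ioo.compl, hUunif i,
      Measure.restrict_apply measurableSet_Ioo.compl]
    simp
  have hLset : ∀ᵐ ω ∂P, ∀ k, L k ω ∈ Ioc (0:ℝ) 1 := by
    filter_upwards [hae] with ω hω
    intro k
    induction k with
    | zero => simp [hL0 ω]
    | succ k ih =>
      rw [hL k ω]
      obtain ⟨h1, h2⟩ := hω (k+1)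
      exact ⟨mul_pos ih.1 h1, by nlinarith [ih.1, ih.2]⟩
  -- L as a product, independence
  have hLprod : ∀ k, L k = ∏ j ∈ Finset.Icc 1 k, U j := by
    intro k
    induction k with
    | zero => funext ω; simp [hL0 ω]
    | succ k ih =>
      funext ω
      rw [hL k ω, ih]
      rw [Finset.prod_Icc_succ_top (Nat.one_le_iff_ne_zero.2 (Nat.succ_ne_zero k))]
      simp [Finset.prod_apply]
  have hIndep : ∀ k, IndepFun (L k) (U (k+1)) P := by
    intro k
    have h := hUindep.indepFun_finsetProd_of_notMem hUmeas
      (s := Finset.Icc 1 k) (i := k+1) (by simp)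
    rw [hLprod k]
    exact h
  -- integrability over P
  have intU : ∀ i, Integrable (U i) P := by
    intro i
    apply Integrable.mono' (integrable_const (1:ℝ)) (hUmeas i).aestronglyMeasurable
    filter_upwards [hae] with ω hω
    rw [Real.norm_eq_abs, abs_of_pos (hω i).1]
    exact (hω i).2.le
  have intL : ∀ k, Integrable (L k) P := by
    intro k
    apply Integrable.mono' (integrable_const (1:ℝ)) (hLmeas k).aestronglyMeasurable
    filter_upwards [hLset] with ω hω
    rw [Real.norm_eq_abs, abs_of_pos (hω k).1]
    exact (hω k).2
  have intG : ∀ k, Integrable (fun ω => sbG c (L k ω)) P := by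
    intro k
    apply Integrable.mono' (integrable_const (c * Real.exp c))
      ((sbG_measurable c).comp (hLmeas k)).aestronglyMeasurable
    filter_upwards [hLset] with ω hω
    simp only [Function.comp_apply]
    rw [Real.norm_eq_abs, abs_of_nonneg (sbG_nonneg hc.le (hω k).1.le)]
    exact sbG_le hc.le (hω k).1.le (hω k).2
  have intE : ∀ k, Integrable (fun ω => Real.exp (c * ℓ (k+1) ω)) P := by
    intro k
    apply Integrable.mono' (integrable_const (Real.exp c))
      (Real.measurable_exp.comp ((hℓmeas k).const_mul c)).aestronglyMeasurable
    filter_upwards [hLset] with ω hω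
    simp only [Function.comp_apply]
    rw [Real.norm_eq_abs, abs_of_pos (Real.exp_pos _)]
    apply Real.exp_le_exp.2
    rw [hℓ k ω]
    nlinarith [(hω k).2, (hω (k+1)).1]
  haveI : IsProbabilityMeasure (volume.restrict (Ioo (0:ℝ) 1)) := by
    constructor
    simp [Real.volume_Ioo]
  -- key recursion step
  have step : ∀ k, (∫ ω, Real.exp (c * ℓ (k+1) ω) ∂P) + (∫ ω, sbG c (L (k+1) ω) ∂P)
      = 1 + ∫ ω, sbG c (L k ω) ∂P := by
    intro k
    set μ := Measure.map (L k) P with hμ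
    have hν : True := trivial
    haveI : IsProbabilityMeasure μ := Measure.isProbabilityMeasure_map (hLmeas k).aemeasurable
    have hμae : ∀ᵐ t ∂μ, t ∈ Ioc (0:ℝ) 1 := by
      rw [hμ]
      apply (ae_map_iff (hLmeas k).aemeasurable measurableSet_Ioc).2
      filter_upwards [hLset] with ω hω using hω k
    set Φ : ℝ × ℝ → ℝ := fun p => Real.exp (c*(p.1*(1-p.2))) + sbG c (p.1*p.2) with hΦ
    have hΦm : Measurable Φ := by
      apply Measurable.add
      · fun_prop
      · exact (sbG_measurable c).comp (measurable_fst.mul measurable_snd)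
    have hmapP : Measure.map (fun ω => (L k ω, U (k+1) ω)) P = μ.prod (volume.restrict (Ioo (0:ℝ) 1)) := by
      rw [hμ, ← hUunif (k+1)]
      exact (indepFun_iff_map_prod_eq_prod_map_map (hLmeas k).aemeasurable
        (hUmeas (k+1)).aemeasurable).1 (hIndep k)
    have hpt : ∀ ω, Real.exp (c * ℓ (k+1) ω) + sbG c (L (k+1) ω)
        = Φ (L k ω, U (k+1) ω) := by
      intro ω
      simp only [hΦ]
      rw [hℓ k ω, hL k ω]
      have e1 : c * (L k ω - L k ω * U (k+1) ω) = c * (L k ω * (1 - U (k+1) ω)) := by ring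
      rw [e1]
    have hΦint : Integrable Φ (μ.prod (volume.restrict (Ioo (0:ℝ) 1))) := by
      refine ⟨hΦm.aestronglyMeasurable, ?_⟩
      have hnull : (μ.prod (volume.restrict (Ioo (0:ℝ) 1))) ((Ioc (0:ℝ) 1 ×ˢ Ioo (0:ℝ) 1)ᶜ) = 0 := by
        rw [compl_prod_eq_union]
        apply measure_union_null
        · rw [Measure.prod_prod]
          have h1 : μ (Ioc (0:ℝ) 1)ᶜ = 0 := ae_iff.1 hμae
          rw [h1, zero_mul]
        · rw [Measure.prod_prod, Measure.restrict_apply measurableSet_Ioo.compl]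
          simp
      apply (hasFiniteIntegral_const (Real.exp c + c * Real.exp c)).mono'
      rw [ae_iff]
      apply measure_mono_null _ hnull
      intro p hp
      simp only [mem_setOf_eq, not_le] at hp
      simp only [mem_compl_iff]
      intro hmem
      obtain ⟨hp1, hp2⟩ := hmem
      apply absurd hp
      push_neg
      have hval : Φ p = Real.exp (c*(p.1*(1-p.2))) + sbG c (p.1*p.2) := rfl
      rw [Real.norm_eq_abs, hval]
      have h1 : Real.exp (c*(p.1*(1-p.2))) ≤ Real.exp c := by
        apply Real.exp_le_exp.2
        have hle : p.1 * (1 - p.2) ≤ 1 := by nlinarith [hp1.1, hp1.2, hp2.1, hp2.2]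
        exact mul_le_of_le_one_right hc.le hle
      have h2 : 0 ≤ p.1 * p.2 := by nlinarith [hp1.1.le, hp2.1.le]
      have h3 : p.1 * p.2 ≤ 1 := by nlinarith [hp1.1, hp1.2, hp2.1, hp2.2]
      have h4 := sbG_nonneg hc.le h2
      have h5 := sbG_le hc.le h2 h3
      rw [abs_of_nonneg (by positivity)]
      linarith [Real.exp_pos (c*(p.1*(1-p.2)))]
    have intGμ : Integrable (fun t => sbG c t) μ := by
      apply Integrable.mono' (integrable_const (c * Real.exp c))
        (sbG_measurable c).aestronglyMeasurable
      filter_upwards [hμae] with t ht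
      rw [Real.norm_eq_abs, abs_of_nonneg (sbG_nonneg hc.le ht.1.le)]
      exact sbG_le hc.le ht.1.le ht.2
    calc (∫ ω, Real.exp (c * ℓ (k+1) ω) ∂P) + (∫ ω, sbG c (L (k+1) ω) ∂P)
        = ∫ ω, (Real.exp (c * ℓ (k+1) ω) + sbG c (L (k+1) ω)) ∂P :=
          (integral_add (intE k) (intG (k+1))).symm
      _ = ∫ ω, Φ (L k ω, U (k+1) ω) ∂P := by
          apply integral_congr_ae
          filter_upwards with ω using hpt ω
      _ = ∫ p, Φ p ∂(μ.prod (volume.restrict (Ioo (0:ℝ) 1))) := by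
          rw [← hmapP, integral_map ((hLmeas k).prodMk (hUmeas (k+1))).aemeasurable
            hΦm.aestronglyMeasurable]
      _ = ∫ t, (∫ u, Φ (t, u) ∂(volume.restrict (Ioo (0:ℝ) 1))) ∂μ := integral_prod Φ hΦint
      _ = ∫ t, (1 + sbG c t) ∂μ := by
          apply integral_congr_ae
          filter_upwards [hμae] with t ht
          have hval : ∀ u : ℝ, Φ (t, u) = Real.exp (c*(t*(1-u))) + sbG c (t*u) := fun u => rfl
          simp only [hval]
          exact sbG_identity hc ht.1 ht.2
      _ = 1 + ∫ t, sbG c t ∂μ := by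
          rw [integral_add (integrable_const 1) intGμ]
          simp
      _ = 1 + ∫ ω, sbG c (L k ω) ∂P := by
          rw [hμ, integral_map (hLmeas k).aemeasurable (sbG_measurable c).aestronglyMeasurable]
  -- telescoping sum
  have hsum : ∀ m : ℕ, ∑ k ∈ Finset.Icc 1 m, ∫ ω, Real.exp (c * ℓ k ω) ∂P
      = m + (∫ ω, sbG c (L 0 ω) ∂P) - ∫ ω, sbG c (L m ω) ∂P := by
    intro m
    induction m with
    | zero => simp
    | succ m ih =>
      rw [Finset.sum_Icc_succ_top (Nat.one_le_iff_ne_zero.2 (Nat.succ_ne_zero m)), ih]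
      have := step m
      push_cast
      linarith
  have hS0 : ∫ ω, sbG c (L 0 ω) ∂P = sbG c 1 := by
    simp [hL0]
  have hI : ∫ x in Ioo (0:ℝ) 1, (Real.exp (c * x) - 1) / x = sbG c 1 := by
    rw [sbG]
    simp [mul_one]
  -- the difference equals E[G(L n)]
  have hdiff : (n : ℝ) + (∫ x in Ioo (0:ℝ) 1, (Real.exp (c * x) - 1) / x)
      - ∑ k ∈ Finset.Icc 1 n, ∫ ω, Real.exp (c * ℓ k ω) ∂P
      = ∫ ω, sbG c (L n ω) ∂P := by
    rw [hsum n, hS0, hI]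
    ring
  rw [hdiff, hI]
  constructor
  · apply integral_nonneg_of_ae
    filter_upwards [hLset] with ω hω
    exact sbG_nonneg hc.le (hω n).1.le
  -- upper bound
  have hEL : ∀ m : ℕ, ∫ ω, L m ω ∂P = (1/2 : ℝ)^m := by
    intro m
    induction m with
    | zero => simp [hL0]
    | succ m ih =>
      have hLU : ∀ ω, L (m+1) ω = (L m * U (m+1)) ω := fun ω => hL m ω
      rw [integral_congr_ae (Eventually.of_forall hLU),
        (hIndep m).integral_mul_eq_mul_integral (intL m).1 (intU (m+1)).1, ih]
      have hU : ∫ ω, U (m+1) ω ∂P = 1/2 := by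
        have h : ∫ y, y ∂(Measure.map (U (m+1)) P) = ∫ ω, U (m+1) ω ∂P :=
          integral_map (hUmeas (m+1)).aemeasurable aestronglyMeasurable_id
        rw [← h, hUunif (m+1), ← integral_Ioc_eq_integral_Ioo,
          ← intervalIntegral.integral_of_le zero_le_one, integral_id]
        norm_num
      rw [hU]
      ring
  have hbound : ∫ ω, sbG c (L n ω) ∂P ≤ (1/2:ℝ)^n * sbG c 1 := by
    have h1 : ∫ ω, sbG c (L n ω) ∂P ≤ ∫ ω, L n ω * sbG c 1 ∂P := by
      apply integral_mono_ae (intG n) ((intL n).mul_const (sbG c 1))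
      filter_upwards [hLset] with ω hω
      exact sbG_le_mul hc.le (hω n).1.le (hω n).2
    rw [integral_mul_const, hEL n] at h1
    exact h1
  calc ∫ ω, sbG c (L n ω) ∂P ≤ (1/2:ℝ)^n * sbG c 1 := hbound
    _ = 2 ^ (-(n:ℤ)) * sbG c 1 := by
        congr 1
        rw [zpow_neg, zpow_natCast]
        simp [one_div, inv_pow]
end

section
/- For a stick-breaking process $\ell = (\ell_n)$ on $[0,1]$ based on the uniform law, the $n$-th stick length $\ell_n$ has probability density $x \mapsto \log(1/x)^{n-1}/(n-1)!$ on $(0,1)$. -/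
open MeasureTheory ProbabilityTheory Real Set

noncomputable def sbDen (k : ℕ) : ℝ → ENNReal := fun x => ENNReal.ofReal
  ((Ioo (0:ℝ) 1).indicator (fun x => (Real.log (1/x)) ^ k / (Nat.factorial k)) x)

noncomputable def sbMeas (k : ℕ) : Measure ℝ := volume.withDensity (sbDen k)

lemma sbDen_meas (k : ℕ) : Measurable (sbDen k) := by
  apply ENNReal.measurable_ofReal.comp
  exact Measurable.indicator (by measurability) measurableSet_Ioo

lemma sbMeas_zero : sbMeas 0 = volume.restrict (Ioo (0:ℝ) 1) := by
  rw [sbMeas, ← withDensity_indicator_one measurableSet_Ioo]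
  congr 1
  funext x
  by_cases hx : x ∈ Ioo (0:ℝ) 1 <;> simp [sbDen, hx]

-- FTC: derivative
lemma sb_deriv (k : ℕ) {x : ℝ} (hx : 0 < x) :
    HasDerivAt (fun x : ℝ => -((Real.log (1/x)) ^ (k+1) / (Nat.factorial (k+1))))
      ((Real.log (1/x)) ^ k / (Nat.factorial k) * x⁻¹) x := by
  have hlog : HasDerivAt (fun x : ℝ => Real.log (1/x)) (-x⁻¹) x := by
    have h1 : HasDerivAt (fun x : ℝ => Real.log x) x⁻¹ x := Real.hasDerivAt_log hx.ne'
    have : (fun x : ℝ => Real.log (1/x)) = fun x => -Real.log x := by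
      funext y; rw [one_div, Real.log_inv]
    rw [this]
    exact h1.neg
  have hpow := (hlog.pow (k+1)).neg
  have h2 : (Real.log (1/x))^k / (Nat.factorial k) * x⁻¹
      = -((↑(k + 1) : ℝ) * Real.log (1 / x) ^ (k + 1 - 1) * -x⁻¹) / (Nat.factorial (k+1)) := by
    rw [Nat.add_sub_cancel, Nat.factorial_succ]
    have h0 : (Nat.factorial k : ℝ) ≠ 0 := Nat.cast_ne_zero.mpr (Nat.factorial_ne_zero k)
    have h1 : ((k:ℝ) + 1) ≠ 0 := by positivity
    push_cast
    field_simp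
  rw [h2]
  have := hpow.div_const (Nat.factorial (k+1) : ℝ)
  simpa [neg_div] using this

lemma sb_integral (k : ℕ) {t : ℝ} (ht : 0 < t) (ht1 : t ≤ 1) :
    ∫⁻ x in Ioo t 1, ENNReal.ofReal ((Real.log (1/x))^k / (Nat.factorial k) * x⁻¹)
      = ENNReal.ofReal ((Real.log (1/t))^(k+1) / (Nat.factorial (k+1))) := by
  set g : ℝ → ℝ := fun x => (Real.log (1/x))^k / (Nat.factorial k) * x⁻¹ with hg
  have hcont : ContinuousOn g (Icc t 1) := by
    intro x hx
    have hx0 : x ≠ 0 := by have := hx.1; intro h; rw [h] at this; linarith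
    apply ContinuousAt.continuousWithinAt
    have hlog : ContinuousAt (fun x : ℝ => Real.log (1/x)) x := by
      apply (Real.continuousAt_log (by simpa using hx0)).comp
      exact (continuousAt_const.div continuousAt_id hx0)
    exact ((hlog.pow k).div_const _).mul (continuousAt_inv₀ hx0)
  have hInt : IntegrableOn g (Ioo t 1) := by
    exact (hcont.integrableOn_compact isCompact_Icc).mono_set Ioo_subset_Icc_self
  have hnn : 0 ≤ᵐ[volume.restrict (Ioo t 1)] g := by
    refine (ae_restrict_iff' measurableSet_Ioo).mpr (ae_of_all _ fun x hx => ?_)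
    have h1 : (0:ℝ) ≤ Real.log (1/x) :=
      Real.log_nonneg (one_le_one_div (lt_trans ht hx.1) hx.2.le)
    have h2 : (0:ℝ) < x⁻¹ := inv_pos.mpr (lt_trans ht hx.1)
    have h3 : (0:ℝ) < (Nat.factorial k : ℝ) := by positivity
    positivity
  rw [← ofReal_integral_eq_lintegral_ofReal hInt hnn]
  congr 1
  have hki : ∫ x in Ioo t 1, g x = ∫ x in t..1, g x := by
    rw [intervalIntegral.integral_of_le ht1, MeasureTheory.integral_Ioc_eq_integral_Ioo]
  rw [hki]
  have hftc := intervalIntegral.integral_eq_sub_of_hasDerivAt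
    (f := fun x : ℝ => -((Real.log (1/x)) ^ (k+1) / (Nat.factorial (k+1))))
    (f' := g) (a := t) (b := 1)
    (fun x hx => by
      rw [uIcc_of_le ht1] at hx
      exact sb_deriv k (lt_of_lt_of_le ht hx.1))
    (by
      apply ContinuousOn.intervalIntegrable
      rwa [uIcc_of_le ht1])
  rw [hftc]
  norm_num

lemma sb_key (k : ℕ) (t : ℝ) :
    ∫⁻ x, sbDen k x * ENNReal.ofReal x⁻¹ * (Ioo (0:ℝ) x).indicator 1 t ∂volume
      = sbDen (k+1) t := by
  by_cases ht : 0 < t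
  · by_cases ht1 : t < 1
    · have heq : (fun x => sbDen k x * ENNReal.ofReal x⁻¹ * (Ioo (0:ℝ) x).indicator 1 t)
          = (Ioo t 1).indicator
              (fun x => ENNReal.ofReal ((Real.log (1/x))^k / (Nat.factorial k) * x⁻¹)) := by
        funext x
        by_cases hx : x ∈ Ioo t 1
        · have hx01 : x ∈ Ioo (0:ℝ) 1 := ⟨lt_trans ht hx.1, hx.2⟩
          have htx : t ∈ Ioo (0:ℝ) x := ⟨ht, hx.1⟩
          rw [indicator_of_mem hx, indicator_of_mem htx, sbDen, indicator_of_mem hx01]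
          have ha : (0:ℝ) ≤ (Real.log (1/x))^k / (Nat.factorial k) := by
            have h1 : (0:ℝ) ≤ Real.log (1/x) :=
              Real.log_nonneg (one_le_one_div hx01.1 hx01.2.le)
            positivity
          rw [← ENNReal.ofReal_mul ha]
          simp
        · rw [indicator_of_notMem hx]
          rcases not_and_or.mp hx with h | h
          · push_neg at h
            have : t ∉ Ioo (0:ℝ) x := fun hc => absurd hc.2 (not_lt.mpr h)
            rw [indicator_of_notMem this, mul_zero]
          · push_neg at h
            have : x ∉ Ioo (0:ℝ) 1 := fun hc => absurd hc.2 (not_lt.mpr h)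
            rw [sbDen, indicator_of_notMem this]
            simp
      rw [heq, lintegral_indicator measurableSet_Ioo, sb_integral k ht ht1.le,
        sbDen, indicator_of_mem (show t ∈ Ioo (0:ℝ) 1 from ⟨ht, ht1⟩)]
    · have heq : (fun x => sbDen k x * ENNReal.ofReal x⁻¹ * (Ioo (0:ℝ) x).indicator 1 t)
          = fun _ => 0 := by
        funext x
        by_cases hx : x ∈ Ioo (0:ℝ) 1
        · have : t ∉ Ioo (0:ℝ) x := fun hc => absurd (lt_trans hc.2 hx.2) ht1
          rw [indicator_of_notMem this, mul_zero]
        · rw [sbDen, indicator_of_notMem hx]; simp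
      rw [heq, lintegral_zero, sbDen,
        indicator_of_notMem (fun hc : t ∈ Ioo (0:ℝ) 1 => ht1 hc.2)]
      simp
  · have heq : (fun x => sbDen k x * ENNReal.ofReal x⁻¹ * (Ioo (0:ℝ) x).indicator 1 t)
        = fun _ => 0 := by
      funext x
      have : t ∉ Ioo (0:ℝ) x := fun hc => ht hc.1
      rw [indicator_of_notMem this, mul_zero]
    rw [heq, lintegral_zero, sbDen,
      indicator_of_notMem (fun hc : t ∈ Ioo (0:ℝ) 1 => ht hc.1)]
    simp

lemma sbDen_ne_top (k : ℕ) (x : ℝ) : sbDen k x ≠ ⊤ := by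
  rw [sbDen]; exact ENNReal.ofReal_ne_top

instance sbMeas_sfinite (k : ℕ) : SFinite (sbMeas k) := by
  rw [sbMeas]; infer_instance

lemma sb_conv (k : ℕ) :
    Measure.map (fun p : ℝ × ℝ => p.1 * p.2) ((sbMeas k).prod (sbMeas 0)) = sbMeas (k+1) := by
  have hmul : Measurable (fun p : ℝ × ℝ => p.1 * p.2) := measurable_fst.mul measurable_snd
  ext A hA
  have hA' : MeasurableSet ((fun p : ℝ × ℝ => p.1 * p.2) ⁻¹' A) := hmul hA
  rw [Measure.map_apply hmul hA, Measure.prod_apply hA']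
  have hg : Measurable fun x => sbMeas 0 (Prod.mk x ⁻¹' ((fun p : ℝ × ℝ => p.1 * p.2) ⁻¹' A)) :=
    measurable_measure_prodMk_left hA'
  rw [sbMeas, lintegral_withDensity_eq_lintegral_mul _ (sbDen_meas k) hg]
  have step1 : ∀ x : ℝ,
      (sbDen k * fun x => sbMeas 0 (Prod.mk x ⁻¹' ((fun p : ℝ × ℝ => p.1 * p.2) ⁻¹' A))) x
      = sbDen k x * ENNReal.ofReal x⁻¹ * volume (A ∩ Ioo 0 x) := by
    intro x
    simp only [Pi.mul_apply]
    by_cases hx : x ∈ Ioo (0:ℝ) 1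
    · have hxpos := hx.1
      have hmeasB : MeasurableSet (A ∩ Ioo 0 x) := hA.inter measurableSet_Ioo
      have hpre : Prod.mk x ⁻¹' ((fun p : ℝ × ℝ => p.1 * p.2) ⁻¹' A)
          = (fun y => x * y) ⁻¹' A := rfl
      have hset : (fun y => x * y) ⁻¹' A ∩ Ioo 0 1 = (fun y => x * y) ⁻¹' (A ∩ Ioo 0 x) := by
        ext y
        simp only [mem_inter_iff, mem_preimage, mem_Ioo]
        constructor
        · rintro ⟨hy, h0, h1⟩
          exact ⟨hy, mul_pos hxpos h0, by nlinarith⟩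
        · rintro ⟨hy, h0, h1⟩
          refine ⟨hy, by nlinarith, by nlinarith⟩
      have hval : sbMeas 0 (Prod.mk x ⁻¹' ((fun p : ℝ × ℝ => p.1 * p.2) ⁻¹' A))
          = ENNReal.ofReal x⁻¹ * volume (A ∩ Ioo 0 x) := by
        rw [hpre, sbMeas_zero, Measure.restrict_apply (measurable_const_mul x hA), hset,
          ← Measure.map_apply (measurable_const_mul x) hmeasB,
          Real.map_volume_mul_left (ne_of_gt hxpos), Measure.smul_apply, smul_eq_mul,
          abs_of_pos (inv_pos.mpr hxpos)]
      rw [hval, mul_assoc]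
    · have h0 : sbDen k x = 0 := by rw [sbDen, indicator_of_notMem hx]; simp
      rw [h0, zero_mul, zero_mul, zero_mul]
  rw [lintegral_congr step1]
  have step2 : ∀ x : ℝ, sbDen k x * ENNReal.ofReal x⁻¹ * volume (A ∩ Ioo 0 x)
      = ∫⁻ t, sbDen k x * ENNReal.ofReal x⁻¹
          * (A.indicator 1 t * (Ioo 0 x).indicator 1 t) ∂volume := by
    intro x
    rw [lintegral_const_mul' _ _ (ENNReal.mul_ne_top (sbDen_ne_top k x) ENNReal.ofReal_ne_top)]
    congr 1
    rw [← lintegral_indicator_one (hA.inter measurableSet_Ioo)]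
    congr 1
    funext t
    rw [inter_indicator_one, Pi.mul_apply]
  rw [lintegral_congr step2]
  have hS : MeasurableSet {p : ℝ × ℝ | p.2 ∈ Ioo 0 p.1} := by
    have : {p : ℝ × ℝ | p.2 ∈ Ioo 0 p.1} = {p : ℝ × ℝ | 0 < p.2} ∩ {p : ℝ × ℝ | p.2 < p.1} := by
      ext p; simp [mem_Ioo, and_comm]
    rw [this]
    exact (measurableSet_lt measurable_const measurable_snd).inter
      (measurableSet_lt measurable_snd measurable_fst)
  have hHmeas : Measurable (Function.uncurry fun x t => sbDen k x * ENNReal.ofReal x⁻¹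
      * (A.indicator 1 t * (Ioo 0 x).indicator 1 t)) := by
    have h4 : (Function.uncurry fun x t => sbDen k x * ENNReal.ofReal x⁻¹
        * (A.indicator 1 t * (Ioo 0 x).indicator 1 t))
        = fun p : ℝ × ℝ => sbDen k p.1 * ENNReal.ofReal p.1⁻¹
          * (A.indicator 1 p.2 * ({q : ℝ × ℝ | q.2 ∈ Ioo 0 q.1}).indicator 1 p) := by
      funext p
      have : (Ioo (0:ℝ) p.1).indicator (1 : ℝ → ENNReal) p.2
          = ({q : ℝ × ℝ | q.2 ∈ Ioo 0 q.1}).indicator (1 : ℝ × ℝ → ENNReal) p := by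
        by_cases h : p.2 ∈ Ioo (0:ℝ) p.1
        · rw [indicator_of_mem h, indicator_of_mem (by exact h)]; rfl
        · rw [indicator_of_notMem h, indicator_of_notMem (by exact h)]
      rw [← this]
      rfl
    rw [h4]
    exact (((sbDen_meas k).comp measurable_fst).mul
      (ENNReal.measurable_ofReal.comp (measurable_inv.comp measurable_fst))).mul
      (((measurable_one.indicator hA).comp measurable_snd).mul (measurable_one.indicator hS))
  rw [lintegral_lintegral_swap hHmeas.aemeasurable]
  have step3 : ∀ t : ℝ, (∫⁻ x, sbDen k x * ENNReal.ofReal x⁻¹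
      * (A.indicator 1 t * (Ioo 0 x).indicator 1 t) ∂volume)
      = A.indicator (sbDen (k+1)) t := by
    intro t
    have hre : ∀ x, sbDen k x * ENNReal.ofReal x⁻¹ * (A.indicator 1 t * (Ioo 0 x).indicator 1 t)
        = A.indicator 1 t * (sbDen k x * ENNReal.ofReal x⁻¹ * (Ioo 0 x).indicator 1 t) := by
      intro x; ring
    have hne : A.indicator (1 : ℝ → ENNReal) t ≠ ⊤ := by
      by_cases h : t ∈ A <;> simp [h]
    rw [lintegral_congr hre, lintegral_const_mul' _ _ hne, sb_key k t]
    by_cases ht : t ∈ A <;> simp [ht]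
  rw [lintegral_congr step3, lintegral_indicator hA, sbMeas, withDensity_apply _ hA]

lemma sb_prodLaw {Ω : Type*} [MeasurableSpace Ω] (P : Measure Ω) [IsProbabilityMeasure P]
    {X Y : Ω → ℝ} (hX : Measurable X) (hY : Measurable Y) (h : IndepFun X Y P) (k : ℕ)
    (hXl : Measure.map X P = sbMeas k) (hYl : Measure.map Y P = sbMeas 0) :
    Measure.map (fun ω => X ω * Y ω) P = sbMeas (k+1) := by
  have h2 := (indepFun_iff_map_prod_eq_prod_map_map hX.aemeasurable hY.aemeasurable).mp h
  have h3 : (fun ω => X ω * Y ω) = (fun p : ℝ × ℝ => p.1 * p.2) ∘ (fun ω => (X ω, Y ω)) := rfl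
  rw [h3, ← Measure.map_map (g := fun p : ℝ × ℝ => p.1 * p.2) (measurable_fst.mul measurable_snd) (hX.prodMk hY), h2, hXl, hYl,
    sb_conv]

lemma sb_refl : Measure.map (fun x : ℝ => 1 - x) (volume.restrict (Ioo (0:ℝ) 1))
    = volume.restrict (Ioo (0:ℝ) 1) := by
  have hmp : MeasurePreserving (fun x : ℝ => 1 - x) volume volume :=
    Measure.measurePreserving_sub_left volume 1
  have h1 : (fun x : ℝ => 1 - x) ⁻¹' (Ioo 0 1) = Ioo (0:ℝ) 1 := by
    rw [preimage_const_sub_Ioo]; norm_num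
  conv_lhs => rw [← h1]
  rw [← Measure.restrict_map hmp.measurable measurableSet_Ioo, hmp.map_eq]

/-- For a stick-breaking process on `[0,1]` based on the uniform law, the `n`-th stick
length `ℓ n` (for `n ≥ 1`) has probability density `x ↦ log(1/x)^(n-1)/(n-1)!` on `(0,1)`
with respect to Lebesgue measure. -/
theorem stmt_1 {Ω : Type*} [MeasurableSpace Ω] (P : Measure Ω) [IsProbabilityMeasure P]
    (U : ℕ → Ω → ℝ) (hUmeas : ∀ n, Measurable (U n))
    (hUindep : iIndepFun U P)
    (hUunif : ∀ n, Measure.map (U n) P = volume.restrict (Ioo (0 : ℝ) 1))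
    (L ℓ : ℕ → Ω → ℝ)
    (hL0 : ∀ ω, L 0 ω = 1)
    (hL : ∀ n ω, L (n + 1) ω = L n ω * U (n + 1) ω)
    (hℓ : ∀ n ω, ℓ (n + 1) ω = L n ω - L (n + 1) ω)
    (n : ℕ) (hn : 1 ≤ n) :
    Measure.map (ℓ n) P
      = volume.withDensity (fun x => ENNReal.ofReal
          ((Ioo (0 : ℝ) 1).indicator
            (fun x => (Real.log (1 / x)) ^ (n - 1) / (Nat.factorial (n - 1))) x)) := by
  suffices h : Measure.map (ℓ n) P = sbMeas (n - 1) from h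
  -- measurability of L
  have hLmeas : ∀ k, Measurable (L k) := by
    intro k
    induction k with
    | zero => have : L 0 = fun _ => 1 := funext hL0; rw [this]; exact measurable_const
    | succ k ih =>
      have : L (k+1) = fun ω => L k ω * U (k+1) ω := funext (hL k)
      rw [this]; exact ih.mul (hUmeas (k+1))
  -- L as finset product
  have hLpt : ∀ k ω, L k ω = ∏ j ∈ Finset.range k, U (j+1) ω := by
    intro k
    induction k with
    | zero => intro ω; simp [hL0]
    | succ k ih => intro ω; rw [Finset.prod_range_succ, hL k ω, ih ω]
  -- independence of L k and U m for k < m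
  have hIndep : ∀ k m, k < m → IndepFun (L k) (U m) P := by
    intro k m hkm
    have hLk : L k = ∏ j ∈ (Finset.range k).image (· + 1), U j := by
      funext ω
      rw [Finset.prod_apply, Finset.prod_image (fun a _ b _ h => by omega)]
      exact hLpt k ω
    have hm : m ∉ (Finset.range k).image (· + 1) := by
      intro hc
      obtain ⟨j, hj, hjm⟩ := Finset.mem_image.mp hc
      rw [Finset.mem_range] at hj
      omega
    rw [hLk]
    exact hUindep.indepFun_finsetProd_of_notMem hUmeas hm
  -- law of L (k+1)
  have hLlaw : ∀ k, Measure.map (L (k+1)) P = sbMeas k := by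
    intro k
    induction k with
    | zero =>
      have h1 : L 1 = U 1 := funext fun ω => by rw [hL 0 ω, hL0 ω, one_mul]
      rw [h1, hUunif 1, ← sbMeas_zero]
    | succ k ih =>
      have h1 : L (k+2) = fun ω => L (k+1) ω * U (k+2) ω := funext (hL (k+1))
      rw [h1]
      exact sb_prodLaw P (hLmeas (k+1)) (hUmeas (k+2)) (hIndep (k+1) (k+2) (by omega)) k ih
        (by rw [hUunif (k+2), ← sbMeas_zero])
  -- law of 1 - U m
  have hUrefl : ∀ m, Measure.map (fun ω => 1 - U m ω) P = sbMeas 0 := by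
    intro m
    have h1 : (fun ω => 1 - U m ω) = (fun x : ℝ => 1 - x) ∘ U m := rfl
    rw [h1, ← Measure.map_map
        (show Measurable fun x : ℝ => 1 - x from measurable_const.sub measurable_id)
        (hUmeas m), hUunif m, sb_refl, ← sbMeas_zero]
  obtain ⟨m, rfl⟩ : ∃ m, n = m + 1 := ⟨n - 1, (Nat.succ_pred_eq_of_pos hn).symm⟩
  simp only [Nat.add_sub_cancel]
  have hℓeq : ℓ (m+1) = fun ω => L m ω * (1 - U (m+1) ω) := by
    funext ω
    rw [hℓ m ω, hL m ω]; ring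
  match m with
  | 0 =>
    have h1 : ℓ 1 = fun ω => 1 - U 1 ω := by
      funext ω
      rw [hℓ 0 ω, hL 0 ω, hL0 ω]; ring
    rw [h1]
    exact hUrefl 1
  | Nat.succ j =>
    rw [hℓeq]
    have hind : IndepFun (L (j+1)) (fun ω => 1 - U (j+2) ω) P := by
      have := (hIndep (j+1) (j+2) (by omega)).comp measurable_id
        (measurable_const.sub measurable_id : Measurable fun x : ℝ => 1 - x)
      exact this
    exact sb_prodLaw P (hLmeas (j+1)) (measurable_const.sub (hUmeas (j+2))) hind j (hLlaw j)
      (hUrefl (j+2))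
end

section
/- For every $c > 0$, $\lim_{c \to \infty} c^{-1} e^{-c} (1+c^2) \int_0^1 x^{-1}(e^{cx}-1)\,dx = 1$ and $\lim_{c \to 0^+} c^{-1} e^{-c} (1+c^2) \int_0^1 x^{-1}(e^{cx}-1)\,dx = 1$. -/
open MeasureTheory Real Set Filter

noncomputable def hfun : ℝ → ℝ := fun t => (Real.exp t - 1) / t

lemma hfun_nonneg (t : ℝ) : 0 ≤ hfun t := by
  unfold hfun
  rcases lt_trichotomy t 0 with h | h | h
  · rw [div_nonneg_iff]
    exact Or.inr ⟨by nlinarith [Real.exp_le_exp.2 h.le, Real.exp_zero], h.le⟩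
  · simp [h]
  · exact div_nonneg (by nlinarith [Real.add_one_le_exp t]) h.le

lemma one_le_hfun {t : ℝ} (ht : 0 < t) : 1 ≤ hfun t := by
  unfold hfun
  rw [le_div_iff₀ ht]
  nlinarith [Real.add_one_le_exp t]

lemma hfun_le_exp {t : ℝ} (ht : 0 ≤ t) : hfun t ≤ Real.exp t := by
  unfold hfun
  rcases eq_or_lt_of_le ht with h | h
  · simp [← h]
  · rw [div_le_iff₀ h]
    have h2 : Real.exp (-t) * Real.exp t = 1 := by rw [← Real.exp_add]; simp
    nlinarith [Real.add_one_le_exp (-t), Real.exp_pos t]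

lemma hfun_measurable : Measurable hfun :=
  (Real.measurable_exp.sub measurable_const).div measurable_id

lemma hfun_integrable_le {a b : ℝ} (ha : 0 ≤ a) (hab : a ≤ b) :
    IntervalIntegrable hfun volume a b := by
  rw [intervalIntegrable_iff_integrableOn_Ioc_of_le hab]
  apply Measure.integrableOn_of_bounded (M := Real.exp b) (by simp)
    hfun_measurable.aestronglyMeasurable
  filter_upwards [ae_restrict_mem measurableSet_Ioc] with t ht
  rw [Real.norm_eq_abs, abs_of_nonneg (hfun_nonneg t)]
  exact (hfun_le_exp (ha.trans ht.1.le)).trans (Real.exp_le_exp.2 ht.2)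

lemma hfun_integrable {a b : ℝ} (ha : 0 ≤ a) (hb : 0 ≤ b) :
    IntervalIntegrable hfun volume a b := by
  rcases le_total a b with hab | hab
  · exact hfun_integrable_le ha hab
  · exact (hfun_integrable_le hb hab).symm

lemma key_identity {c : ℝ} (hc : 0 < c) :
    (∫ x in Ioo (0:ℝ) 1, (Real.exp (c*x) - 1)/x) = ∫ t in (0:ℝ)..c, hfun t := by
  have h1 : ∀ x : ℝ, (Real.exp (c*x) - 1)/x = c * hfun (c*x) := by
    intro x
    rcases eq_or_ne x 0 with rfl | hx
    · simp [hfun]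
    · unfold hfun
      field_simp
  rw [← integral_Ioc_eq_integral_Ioo, ← intervalIntegral.integral_of_le zero_le_one]
  simp_rw [h1]
  have h2 := intervalIntegral.smul_integral_comp_mul_left (a := (0:ℝ)) (b := 1) hfun c
  simp only [mul_zero, mul_one, smul_eq_mul] at h2
  rw [← h2, intervalIntegral.integral_const_mul]

lemma integral_mono_Ioc {a b : ℝ} {f g : ℝ → ℝ} (hab : a ≤ b)
    (hf : IntervalIntegrable f volume a b) (hg : IntervalIntegrable g volume a b)
    (h : ∀ t ∈ Ioc a b, f t ≤ g t) : (∫ u in a..b, f u) ≤ ∫ u in a..b, g u := by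
  rw [intervalIntegral.integral_of_le hab, intervalIntegral.integral_of_le hab]
  exact setIntegral_mono_on hf.1 hg.1 measurableSet_Ioc h

lemma g_lb {c : ℝ} (hc : 0 ≤ c) : c ≤ ∫ t in (0:ℝ)..c, hfun t := by
  have := integral_mono_Ioc hc intervalIntegrable_const (hfun_integrable le_rfl hc)
    (fun t ht => one_le_hfun ht.1)
  simpa using this

lemma g_ub {c : ℝ} (hc : 0 ≤ c) : (∫ t in (0:ℝ)..c, hfun t) ≤ Real.exp c - 1 := by
  have := integral_mono_Ioc hc (hfun_integrable le_rfl hc)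
    (Real.continuous_exp.intervalIntegrable 0 c) (fun t ht => hfun_le_exp ht.1.le)
  simpa [integral_exp] using this

lemma log_le_quarter {c : ℝ} (hc : 64 ≤ c) : Real.log c ≤ c / 4 := by
  have hc0 : (0:ℝ) < c := by linarith
  have h1 : Real.log c = 2 * Real.log (Real.sqrt c) := by
    rw [Real.log_sqrt hc0.le]; ring
  have h2 : Real.log (Real.sqrt c) ≤ Real.sqrt c - 1 :=
    Real.log_le_sub_one_of_pos (Real.sqrt_pos.2 hc0)
  have h3 : Real.sqrt c ≤ c / 8 := by
    nlinarith [Real.sq_sqrt hc0.le, Real.sqrt_nonneg c]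
  linarith
lemma g_atTop_lb {c : ℝ} (hc : 64 ≤ c) :
    (Real.exp c - Real.exp c / c - Real.log c) / c ≤ ∫ t in (0:ℝ)..c, hfun t := by
  have hc0 : (0:ℝ) < c := by linarith
  have hl0 : 0 ≤ Real.log c := Real.log_nonneg (by linarith)
  have hl4 : Real.log c ≤ c / 4 := log_le_quarter hc
  set s := c - Real.log c with hs_def
  have hs0 : 0 < s := by simp only [hs_def]; linarith
  have hsc : s ≤ c := by simp only [hs_def]; linarith
  have hsplit : (∫ t in (0:ℝ)..s, hfun t) + ∫ t in s..c, hfun t = ∫ t in (0:ℝ)..c, hfun t :=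
    intervalIntegral.integral_add_adjacent_intervals (hfun_integrable le_rfl hs0.le)
      (hfun_integrable hs0.le hc0.le)
  have h1 : 0 ≤ ∫ t in (0:ℝ)..s, hfun t :=
    intervalIntegral.integral_nonneg hs0.le (fun u _ => hfun_nonneg u)
  have h2 : ((Real.exp c - Real.exp s) - (c - s)) / c ≤ ∫ t in s..c, hfun t := by
    have hint : IntervalIntegrable (fun t => (Real.exp t - 1) / c) volume s c :=
      ((Real.continuous_exp.sub continuous_const).div_const c).intervalIntegrable s c
    have hm := integral_mono_Ioc hsc hint (hfun_integrable hs0.le hc0.le) ?_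
    · have hcomp : (∫ t in s..c, (Real.exp t - 1) / c) = ((Real.exp c - Real.exp s) - (c - s)) / c := by
        rw [intervalIntegral.integral_div,
          intervalIntegral.integral_sub (Real.continuous_exp.intervalIntegrable s c)
            intervalIntegrable_const, integral_exp, intervalIntegral.integral_const]
        simp [smul_eq_mul]
      rw [hcomp] at hm
      exact hm
    · intro t ht
      unfold hfun
      gcongr
      · nlinarith [Real.add_one_le_exp t, hs0.trans ht.1]
      · exact hs0.trans ht.1
      · exact ht.2
  have hes : Real.exp s = Real.exp c / c := by
    rw [hs_def, Real.exp_sub, Real.exp_log hc0]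
  rw [← hsplit]
  have : ((Real.exp c - Real.exp s) - (c - s)) / c = (Real.exp c - Real.exp c / c - Real.log c) / c := by
    rw [hes, hs_def]; ring_nf
  linarith [this ▸ h2]

lemma g_atTop_ub {c : ℝ} (hc : 64 ≤ c) :
    (∫ t in (0:ℝ)..c, hfun t) ≤ Real.exp c / c ^ 2 + Real.exp c / (c - 2 * Real.log c) := by
  have hc0 : (0:ℝ) < c := by linarith
  have hl0 : 0 ≤ Real.log c := Real.log_nonneg (by linarith)
  have hl4 : Real.log c ≤ c / 4 := log_le_quarter hc
  set s := c - 2 * Real.log c with hs_def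
  have hs0 : 0 < s := by simp only [hs_def]; linarith
  have hsc : s ≤ c := by simp only [hs_def]; linarith
  have hes : Real.exp s = Real.exp c / c ^ 2 := by
    rw [hs_def, Real.exp_sub]
    congr 1
    rw [two_mul, Real.exp_add, Real.exp_log hc0, sq]
  have hsplit : (∫ t in (0:ℝ)..s, hfun t) + ∫ t in s..c, hfun t = ∫ t in (0:ℝ)..c, hfun t :=
    intervalIntegral.integral_add_adjacent_intervals (hfun_integrable le_rfl hs0.le)
      (hfun_integrable hs0.le hc0.le)
  have h1 : (∫ t in (0:ℝ)..s, hfun t) ≤ Real.exp c / c ^ 2 := by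
    have := g_ub hs0.le
    rw [hes] at this
    linarith
  have h2 : (∫ t in s..c, hfun t) ≤ Real.exp c / (c - 2 * Real.log c) := by
    have hint : IntervalIntegrable (fun t => Real.exp t / s) volume s c :=
      (Real.continuous_exp.div_const s).intervalIntegrable s c
    have hm := integral_mono_Ioc hsc (hfun_integrable hs0.le hc0.le) hint ?_
    · have hcomp : (∫ t in s..c, Real.exp t / s) = (Real.exp c - Real.exp s) / s := by
        rw [intervalIntegral.integral_div, integral_exp]
      rw [hcomp] at hm
      have : (Real.exp c - Real.exp s) / s ≤ Real.exp c / s := by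
        gcongr
        · linarith [Real.exp_pos s]
      rw [← hs_def]
      linarith
    · intro t ht
      unfold hfun
      calc (Real.exp t - 1) / t ≤ Real.exp t / t := by
            gcongr
            · exact (hs0.trans ht.1).le
            · linarith
        _ ≤ Real.exp t / s := by
            apply div_le_div_of_nonneg_left (Real.exp_pos t).le hs0 ht.1.le
  rw [← hsplit]
  linarith

lemma tendsto_one_div_sq : Tendsto (fun c : ℝ => 1 / c ^ 2) atTop (nhds 0) := by
  simpa [one_div, Function.comp_def] using tendsto_inv_atTop_zero.comp
    (tendsto_pow_atTop (α := ℝ) (n := 2) (by norm_num))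

lemma tendsto_ratio_sq : Tendsto (fun c : ℝ => (1 + c ^ 2) / c ^ 2) atTop (nhds 1) := by
  have h1 : Tendsto (fun c : ℝ => 1 / c ^ 2 + 1) atTop (nhds (0 + 1)) :=
    tendsto_one_div_sq.add tendsto_const_nhds
  rw [zero_add] at h1
  apply h1.congr'
  filter_upwards [eventually_gt_atTop (0:ℝ)] with c hc
  field_simp

lemma tendsto_log_mul_exp_neg :
    Tendsto (fun c : ℝ => Real.log c * Real.exp (-c)) atTop (nhds 0) := by
  apply tendsto_of_tendsto_of_tendsto_of_le_of_le' tendsto_const_nhds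
    ((tendsto_pow_mul_exp_neg_atTop_nhds_zero 1).congr (fun x => by rw [pow_one]))
  · filter_upwards [eventually_ge_atTop (1:ℝ)] with c hc
    exact mul_nonneg (Real.log_nonneg hc) (Real.exp_pos _).le
  · filter_upwards [eventually_ge_atTop (1:ℝ)] with c hc
    apply mul_le_mul_of_nonneg_right _ (Real.exp_pos _).le
    linarith [Real.log_le_sub_one_of_pos (show (0:ℝ) < c by linarith)]

lemma tendsto_L : Tendsto (fun c : ℝ =>
    (1 + c ^ 2) / c ^ 2 * (1 - 1 / c - Real.log c * Real.exp (-c))) atTop (nhds 1) := by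
  have h1d : Tendsto (fun c : ℝ => 1 / c) atTop (nhds 0) := by
    exact tendsto_inv_atTop_zero.congr (fun x => (one_div x).symm)
  have h2 : Tendsto (fun c : ℝ => 1 - 1 / c - Real.log c * Real.exp (-c)) atTop
      (nhds (1 - 0 - 0)) :=
    (tendsto_const_nhds.sub h1d).sub tendsto_log_mul_exp_neg
  norm_num at h2
  simpa using tendsto_ratio_sq.mul h2

lemma tendsto_U : Tendsto (fun c : ℝ =>
    (1 + c ^ 2) / c ^ 3 + (1 + c ^ 2) / (c * (c - 2 * Real.log c))) atTop (nhds 1) := by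
  have h1 : Tendsto (fun c : ℝ => (1 + c ^ 2) / c ^ 3) atTop (nhds 0) := by
    have h3 : Tendsto (fun c : ℝ => 1 / c ^ 3 + 1 / c) atTop (nhds (0 + 0)) := by
      apply Tendsto.add
      · simpa [one_div, Function.comp_def] using tendsto_inv_atTop_zero.comp
          (tendsto_pow_atTop (α := ℝ) (n := 3) (by norm_num))
      · exact tendsto_inv_atTop_zero.congr (fun x => (one_div x).symm)
    rw [add_zero] at h3
    apply h3.congr'
    filter_upwards [eventually_gt_atTop (0:ℝ)] with c hc
    field_simp
  have hlog : Tendsto (fun c : ℝ => Real.log c / c) atTop (nhds 0) :=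
    Real.isLittleO_log_id_atTop.tendsto_div_nhds_zero
  have h2 : Tendsto (fun c : ℝ => (1 + c ^ 2) / (c * (c - 2 * Real.log c))) atTop (nhds 1) := by
    have hnum : Tendsto (fun c : ℝ => 1 / c ^ 2 + 1) atTop (nhds (0 + 1)) :=
      tendsto_one_div_sq.add tendsto_const_nhds
    have hden : Tendsto (fun c : ℝ => 1 - 2 * (Real.log c / c)) atTop (nhds (1 - 2 * 0)) :=
      tendsto_const_nhds.sub (hlog.const_mul 2)
    have h5 := hnum.div hden (by norm_num)
    norm_num at h5
    apply h5.congr'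
    filter_upwards [eventually_ge_atTop (64:ℝ)] with c hc
    simp only [Pi.div_apply]
    have hc0 : (0:ℝ) < c := by linarith
    have hl4 : Real.log c ≤ c / 4 := by
      have h1' : Real.log c = 2 * Real.log (Real.sqrt c) := by
        rw [Real.log_sqrt hc0.le]; ring
      have h2' : Real.log (Real.sqrt c) ≤ Real.sqrt c - 1 :=
        Real.log_le_sub_one_of_pos (Real.sqrt_pos.2 hc0)
      have h3' : Real.sqrt c ≤ c / 8 := by
        nlinarith [Real.sq_sqrt hc0.le, Real.sqrt_nonneg c]
      linarith
    have hs0 : (0:ℝ) < c - 2 * Real.log c := by linarith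
    have hd : (0:ℝ) < 1 - 2 * (Real.log c / c) := by
      have : Real.log c / c ≤ 1/4 := by
        rw [div_le_iff₀ hc0]; linarith
      linarith
    rw [div_eq_div_iff hd.ne' (by positivity)]
    field_simp
  simpa using h1.add h2

/-- `c⁻¹ e⁻ᶜ (1+c²) ∫_0^1 x⁻¹(e^{cx}-1) dx → 1` both as `c → ∞` and as `c → 0⁺`. -/
theorem stmt_3 :
    Tendsto (fun c : ℝ =>
        c⁻¹ * Real.exp (-c) * (1 + c ^ 2) *
          ∫ x in Ioo (0 : ℝ) 1, (Real.exp (c * x) - 1) / x) atTop (nhds 1) ∧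
    Tendsto (fun c : ℝ =>
        c⁻¹ * Real.exp (-c) * (1 + c ^ 2) *
          ∫ x in Ioo (0 : ℝ) 1, (Real.exp (c * x) - 1) / x) (nhdsWithin 0 (Ioi 0))
      (nhds 1) := by
  constructor
  · apply tendsto_of_tendsto_of_tendsto_of_le_of_le' tendsto_L tendsto_U
    · filter_upwards [eventually_ge_atTop (64:ℝ)] with c hc
      have hc0 : (0:ℝ) < c := by linarith
      rw [key_identity hc0]
      have hpos : (0:ℝ) < c⁻¹ * Real.exp (-c) * (1 + c ^ 2) := by positivity
      have step := mul_le_mul_of_nonneg_left (g_atTop_lb hc) hpos.le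
      refine le_trans (le_of_eq ?_) step
      rw [Real.exp_neg]
      field_simp
    · filter_upwards [eventually_ge_atTop (64:ℝ)] with c hc
      have hc0 : (0:ℝ) < c := by linarith
      have hl4 : Real.log c ≤ c / 4 := log_le_quarter hc
      have hs0 : (0:ℝ) < c - 2 * Real.log c := by linarith
      rw [key_identity hc0]
      have hpos : (0:ℝ) < c⁻¹ * Real.exp (-c) * (1 + c ^ 2) := by positivity
      have step := mul_le_mul_of_nonneg_left (g_atTop_ub hc) hpos.le
      refine le_trans step (le_of_eq ?_)
      rw [Real.exp_neg]
      field_simp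
  · have hlow : Tendsto (fun c : ℝ => Real.exp (-c) * (1 + c ^ 2)) (nhdsWithin 0 (Ioi 0))
        (nhds 1) := by
      have hcont : Continuous fun c : ℝ => Real.exp (-c) * (1 + c ^ 2) := by continuity
      have h0 := hcont.tendsto 0
      norm_num at h0
      exact h0.mono_left nhdsWithin_le_nhds
    have hslope : Tendsto (fun c : ℝ => (Real.exp c - 1) / c) (nhdsWithin 0 (Ioi 0))
        (nhds 1) := by
      have hd := Real.hasDerivAt_exp 0
      rw [hasDerivAt_iff_tendsto_slope] at hd
      rw [Real.exp_zero] at hd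
      have hd2 := hd.mono_left (nhdsWithin_mono 0 (fun x (hx : x ∈ Ioi 0) => ne_of_gt hx))
      apply hd2.congr
      intro x
      simp [slope_def_field, Real.exp_zero]
    have hupp : Tendsto (fun c : ℝ => Real.exp (-c) * (1 + c ^ 2) * ((Real.exp c - 1) / c))
        (nhdsWithin 0 (Ioi 0)) (nhds 1) := by
      simpa using hlow.mul hslope
    apply tendsto_of_tendsto_of_tendsto_of_le_of_le' hlow hupp
    · filter_upwards [self_mem_nhdsWithin] with c (hc : c ∈ Ioi 0)
      have hc0 : (0:ℝ) < c := hc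
      rw [key_identity hc0]
      have hpos : (0:ℝ) < c⁻¹ * Real.exp (-c) * (1 + c ^ 2) := by positivity
      have step := mul_le_mul_of_nonneg_left (g_lb hc0.le) hpos.le
      refine le_trans (le_of_eq ?_) step
      field_simp
    · filter_upwards [self_mem_nhdsWithin] with c (hc : c ∈ Ioi 0)
      have hc0 : (0:ℝ) < c := hc
      rw [key_identity hc0]
      have hpos : (0:ℝ) < c⁻¹ * Real.exp (-c) * (1 + c ^ 2) := by positivity
      have step := mul_le_mul_of_nonneg_left (g_ub hc0.le) hpos.le
      refine le_trans step (le_of_eq ?_)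
      field_simp
end
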